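/- arXiv:math/0204255 — 3 statements merged into one kernel-verified Lean document; each statement's English description precedes it below -/
import Mathlib

section
/- Semantic version of the first epsilon theorem (simplest case): suppose a quantifier-free, epsilon-free formula E is a classical consequence of a set of critical formulas A(t₁) → A(c), …, A(tₙ) → A(c), where c is a fresh constant (playing the role of εx A(x)) not occurring in E or in A(tᵢ). Then E is already a classical propositional consequence of the empty set, i.e., E is valid. -/
/-- Semantic first epsilon theorem (simplest case), per structure: if in a
    structure with domain M the (epsilon-free) formula E, whose truth value P
    does not depend on the interpretation c of the fresh constant, is a
    consequence of the critical formulas A(tᵢ) → A(c), then E holds outright.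
    Quantifying over all structures, E is valid. -/
theorem stmt_10 (M : Type*) [Nonempty M] (A : M → Prop) (n : ℕ)
    (t : Fin n → M) (P : Prop)
    (hconseq : ∀ c : M, (∀ i, A (t i) → A c) → P) : P := by
  by_cases h : ∃ i, A (t i)
  · obtain ⟨j, hj⟩ := h
    exact hconseq (t j) (fun i _ => hj)
  · exact hconseq Classical.ofNonempty (fun i hi => absurd ⟨i, hi⟩ h)
end

section
/- Elimination of free variables: if a quantifier-free formula F without free variables is provable in the elementary calculus of free variables (propositional axioms, substitution rule for free variables, modus ponens) from quantifier-free axioms, then F is provable from variable-free substitution instances of those axioms using modus ponens alone (no substitution rule needed). -/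
/-- Terms over an arithmetic signature, with free variables. -/
inductive Tm where
  | var : ℕ → Tm
  | zero : Tm
  | succ : Tm → Tm

/-- Quantifier-free formulas: Boolean combinations of equations. -/
inductive Fm where
  | eq : Tm → Tm → Fm
  | not : Fm → Fm
  | and : Fm → Fm → Fm
  | or : Fm → Fm → Fm
  | imp : Fm → Fm → Fm

/-- Substitution of terms for free variables in a term. -/
def Tm.subst (σ : ℕ → Tm) : Tm → Tm
  | .var k => σ k
  | .zero => .zero
  | .succ t => .succ (t.subst σ)

/-- Substitution of terms for free variables in a formula. -/
def Fm.subst (σ : ℕ → Tm) : Fm → Fm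
  | .eq s t => .eq (s.subst σ) (t.subst σ)
  | .not F => .not (F.subst σ)
  | .and F G => .and (F.subst σ) (G.subst σ)
  | .or F G => .or (F.subst σ) (G.subst σ)
  | .imp F G => .imp (F.subst σ) (G.subst σ)

/-- A term is variable-free. -/
def Tm.Closed : Tm → Prop
  | .var _ => False
  | .zero => True
  | .succ t => t.Closed

/-- A formula is variable-free. -/
def Fm.Closed : Fm → Prop
  | .eq s t => s.Closed ∧ t.Closed
  | .not F => F.Closed
  | .and F G => F.Closed ∧ G.Closed
  | .or F G => F.Closed ∧ G.Closed
  | .imp F G => F.Closed ∧ G.Closed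

/-- Truth under a Boolean valuation of the atomic equations. -/
def Fm.holds (v : Tm → Tm → Prop) : Fm → Prop
  | .eq s t => v s t
  | .not F => ¬ F.holds v
  | .and F G => F.holds v ∧ G.holds v
  | .or F G => F.holds v ∨ G.holds v
  | .imp F G => F.holds v → G.holds v

/-- Propositional tautology: true under every Boolean valuation of atoms. -/
def Fm.Taut (F : Fm) : Prop := ∀ v : Tm → Tm → Prop, F.holds v

/-- The elementary calculus of free variables: propositional tautologies as
    axioms, the given proper axioms, a substitution rule for free variables,
    and modus ponens. -/
inductive Deriv (Ax : Fm → Prop) : Fm → Prop where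
  | ax {F} : Ax F → Deriv Ax F
  | taut {F} : F.Taut → Deriv Ax F
  | subst {F} (σ : ℕ → Tm) : Deriv Ax F → Deriv Ax (F.subst σ)
  | mp {F G} : Deriv Ax F → Deriv Ax (Fm.imp F G) → Deriv Ax G

/-- Derivations using modus ponens alone from a set of initial formulas. -/
inductive DerivMP (init : Fm → Prop) : Fm → Prop where
  | ax {F} : init F → DerivMP init F
  | mp {F G} : DerivMP init F → DerivMP init (Fm.imp F G) → DerivMP init G

lemma Tm.subst_subst (σ τ : ℕ → Tm) (t : Tm) :
    (t.subst σ).subst τ = t.subst (fun k => (σ k).subst τ) := by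
  induction t <;> simp [Tm.subst, *]

lemma Fm.subst_subst (σ τ : ℕ → Tm) (F : Fm) :
    (F.subst σ).subst τ = F.subst (fun k => (σ k).subst τ) := by
  induction F <;> simp [Fm.subst, Tm.subst_subst, *]

lemma Tm.closed_subst (σ : ℕ → Tm) (h : ∀ k, (σ k).Closed) (t : Tm) :
    (t.subst σ).Closed := by
  induction t <;> simp [Tm.subst, Tm.Closed, *]

lemma Fm.closed_subst (σ : ℕ → Tm) (h : ∀ k, (σ k).Closed) (F : Fm) :
    (F.subst σ).Closed := by
  induction F <;> simp [Fm.subst, Fm.Closed, Tm.closed_subst σ h, *]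

lemma Fm.holds_subst (σ : ℕ → Tm) (v : Tm → Tm → Prop) (F : Fm) :
    (F.subst σ).holds v ↔ F.holds (fun s t => v (s.subst σ) (t.subst σ)) := by
  induction F <;> simp [Fm.subst, Fm.holds, *]

lemma Fm.taut_subst (σ : ℕ → Tm) {F : Fm} (h : F.Taut) : (F.subst σ).Taut := by
  intro v
  exact (Fm.holds_subst σ v F).2 (h _)

lemma Tm.subst_closed (σ : ℕ → Tm) {t : Tm} (h : t.Closed) : t.subst σ = t := by
  induction t <;> simp_all [Tm.subst, Tm.Closed]

lemma Fm.subst_closed (σ : ℕ → Tm) {F : Fm} (h : F.Closed) : F.subst σ = F := by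
  induction F <;> simp_all [Fm.subst, Fm.Closed, Tm.subst_closed]

/-- Elimination of free variables: a variable-free formula provable in the
    elementary calculus of free variables from quantifier-free axioms is
    provable by modus ponens alone from variable-free propositional
    tautologies and variable-free substitution instances of the axioms. -/
theorem stmt_17 (Ax : Fm → Prop) (F : Fm) (hF : F.Closed)
    (hd : Deriv Ax F) :
    DerivMP (fun G => (G.Taut ∧ G.Closed) ∨
      ∃ (A : Fm) (σ : ℕ → Tm), Ax A ∧ (∀ k, (σ k).Closed) ∧ G = A.subst σ) F := by
  set init : Fm → Prop := fun G => (G.Taut ∧ G.Closed) ∨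
      ∃ (A : Fm) (σ : ℕ → Tm), Ax A ∧ (∀ k, (σ k).Closed) ∧ G = A.subst σ with hinit
  have key : ∀ G, Deriv Ax G → ∀ σ : ℕ → Tm, (∀ k, (σ k).Closed) →
      DerivMP init (G.subst σ) := by
    intro G hG
    induction hG with
    | ax h => intro σ hσ; exact DerivMP.ax (Or.inr ⟨_, σ, h, hσ, rfl⟩)
    | taut h =>
      intro σ hσ
      exact DerivMP.ax (Or.inl ⟨Fm.taut_subst σ h, Fm.closed_subst σ hσ _⟩)
    | subst τ _ ih =>
      intro σ hσ
      rw [Fm.subst_subst]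
      exact ih _ (fun k => Tm.closed_subst σ hσ _)
    | mp _ _ ih1 ih2 =>
      intro σ hσ
      exact DerivMP.mp (ih1 σ hσ) (ih2 σ hσ)
  have := key F hd (fun _ => Tm.zero) (fun _ => trivial)
  rwa [Fm.subst_closed _ hF] at this
end

section
/- One step of the Hilbertsche Ansatz reduces the number of distinct epsilon terms' critical formulas: if a propositional proof of a formula B uses critical formulas A(t₁) → A(c), …, A(tₙ) → A(c) for a single fresh constant c (with A and B not containing c, and t₁,…,tₙ not containing c), then there are propositional proofs of ¬A(t₁) → B and of A(t₁) → B[c := t₁], each using only the critical formulas for t₂, …, tₙ; combining by excluded middle and induction on n yields a propositional proof of B using no critical formulas. -/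
/-- Propositional formulas over a type of atoms. -/
inductive PFm (α : Type*) where
  | atom : α → PFm α
  | not : PFm α → PFm α
  | imp : PFm α → PFm α → PFm α

/-- Renaming of atoms (e.g. the effect of substituting a term for the
    constant c on atomic formulas). -/
def PFm.map {α β : Type*} (s : α → β) : PFm α → PFm β
  | .atom a => .atom (s a)
  | .not F => .not (F.map s)
  | .imp F G => .imp (F.map s) (G.map s)

/-- Truth of a propositional formula under a valuation of the atoms. -/
def PFm.eval {α : Type*} (v : α → Prop) : PFm α → Prop
  | .atom a => v a
  | .not F => ¬ F.eval v
  | .imp F G => F.eval v → G.eval v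

/-- Classical propositional consequence from a set of hypotheses (equivalent,
    by soundness and completeness, to propositional derivability). -/
def PConseq {δ : Type*} (Γ : Set (PFm δ)) (φ : PFm δ) : Prop :=
  ∀ v : δ → Prop, (∀ ψ ∈ Γ, ψ.eval v) → φ.eval v

lemma PFm.eval_map {α β : Type*} (s : α → β) (v : β → Prop) (F : PFm α) :
    (F.map s).eval v = F.eval (fun a => v (s a)) := by
  induction F <;> simp [PFm.map, PFm.eval, *]

/-- One step of the Hilbertsche Ansatz. Atoms in `α` do not contain the
    critical variable; atoms in `γ` are the atoms of A(x) containing x, which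
    instantiated at the fresh constant c are fresh atoms, so that `A`
    (over α ⊕ γ) is A(c) and `(A.map (Sum.elim id (τ i)))` is A(tᵢ) (the
    terms tᵢ contain no c, whence their atoms lie in α). B contains no c, so
    B[c := t₁] = B. If B has a propositional proof from the critical formulas
    A(tᵢ) → A(c), i = 1, …, n, then ¬A(t₁) → B and A(t₁) → B[c := t₁] are
    propositionally provable from the critical formulas for t₂, …, tₙ alone,
    and (combining by excluded middle and induction on n) B is propositionally
    provable using no critical formulas at all, i.e. B is valid. -/
theorem stmt_18 {α γ : Type*} (n : ℕ) (hn : 0 < n)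
    (A : PFm (α ⊕ γ)) (τ : Fin n → γ → α) (B : PFm α)
    (At : Fin n → PFm α) (hAt : ∀ i, At i = A.map (Sum.elim id (τ i)))
    (crit : Fin n → PFm (α ⊕ γ))
    (hcrit : ∀ i, crit i = PFm.imp ((At i).map Sum.inl) A)
    (hB : PConseq {ψ | ∃ i, ψ = crit i} (B.map Sum.inl)) :
    PConseq {ψ | ∃ i, i ≠ ⟨0, hn⟩ ∧ ψ = crit i}
        (PFm.imp (PFm.not ((At ⟨0, hn⟩).map Sum.inl)) (B.map Sum.inl)) ∧
    PConseq {ψ | ∃ i, i ≠ ⟨0, hn⟩ ∧ ψ = crit i}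
        (PFm.imp ((At ⟨0, hn⟩).map Sum.inl) (B.map Sum.inl)) ∧
    (∀ w : α → Prop, B.eval w) := by
  have key : ∀ v : (α ⊕ γ) → Prop,
      (∀ ψ ∈ {ψ | ∃ i, i ≠ ⟨0, hn⟩ ∧ ψ = crit i}, PFm.eval v ψ) →
      ((At ⟨0, hn⟩).map Sum.inl).eval v → (B.map Sum.inl).eval v := by
    intro v hv h0
    set v' : (α ⊕ γ) → Prop :=
      Sum.elim (fun a => v (Sum.inl a)) (fun g => v (Sum.inl (τ ⟨0, hn⟩ g))) with hv'
    have hA : A.eval v' := by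
      rw [hAt ⟨0, hn⟩, PFm.eval_map, PFm.eval_map] at h0
      have he : v' = fun x => v (Sum.inl (Sum.elim id (τ ⟨0, hn⟩) x)) := by
        funext x; cases x <;> rfl
      rw [he]; exact h0
    have := hB v' (by
      rintro ψ ⟨i, rfl⟩
      rw [hcrit i]
      intro _; exact hA)
    rw [PFm.eval_map] at this ⊢
    exact this
  refine ⟨?_, ?_, ?_⟩
  · intro v hv hnot
    by_cases h0 : ((At ⟨0, hn⟩).map Sum.inl).eval v
    · exact key v hv h0
    · exact hB v (by
        rintro ψ ⟨i, rfl⟩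
        rw [hcrit i]
        by_cases hi : i = ⟨0, hn⟩
        · subst hi; intro h; exact absurd h h0
        · intro h
          have hc := hv _ ⟨i, hi, rfl⟩
          rw [hcrit i] at hc
          exact hc h)
  · exact key
  · intro w
    by_cases hex : ∃ i, (At i).eval w
    · obtain ⟨i, hi⟩ := hex
      set v : (α ⊕ γ) → Prop := Sum.elim w (fun g => w (τ i g)) with hvdef
      have hA : A.eval v := by
        rw [hAt i, PFm.eval_map] at hi
        have he : v = fun x => w (Sum.elim id (τ i) x) := by
          funext x; cases x <;> rfl
        rw [he]; exact hi
      have := hB v (by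
        rintro ψ ⟨j, rfl⟩
        rw [hcrit j]; intro _; exact hA)
      rw [PFm.eval_map] at this
      exact this
    · push_neg at hex
      set v : (α ⊕ γ) → Prop := Sum.elim w (fun _ => True) with hvdef
      have := hB v (by
        rintro ψ ⟨j, rfl⟩
        rw [hcrit j]
        intro h
        rw [PFm.eval_map] at h
        exact absurd h (hex j))
      rw [PFm.eval_map] at this
      exact this
end
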